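/- Let S be a nontrivial proper subsemigroup of ℚ⁺ with 1 ∈ S, and pick d ∈ ℕ with 1/d ∉ S. Let A be the 3 × 2 matrix with rows (0,1), (d,1), (d,2). Then A is image partition regular over S, but there do not exist k ∈ ℕ and a k × 3 rational matrix B such that {A x : x ∈ (S \ {0})²} ∩ (S \ {0})³ ⊆ {y ∈ (S \ {0})³ : B y = 0} ⊆ {A x : x ∈ S²} ∩ (S \ {0})³. -/

import Mathlib

open scoped BigOperators

noncomputable def mulVecQ {u v : Type} (A : u → v → ℚ) (x : v → ℚ) : u → ℚ :=
  fun i => ∑ᶠ j, A i j * x j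

def IPRQ {u v : Type} (A : u → v → ℚ) (S : Set ℚ) : Prop :=
  ∀ (k : ℕ) (φ : ℚ → Fin k), ∃ x : v → ℚ,
    (∀ j, x j ∈ S \ {0}) ∧ (∀ i, mulVecQ A x i ∈ S \ {0}) ∧
    (∀ i i', φ (mulVecQ A x i) = φ (mulVecQ A x i'))

lemma mulVecQ_two {u : Type} (A : u → Fin 2 → ℚ) (x : Fin 2 → ℚ) (i : u) :
    mulVecQ A x i = A i 0 * x 0 + A i 1 * x 1 := by
  rw [mulVecQ, finsum_eq_sum_of_fintype, Fin.sum_univ_two]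

lemma mulVecQ_three {u : Type} (B : u → Fin 3 → ℚ) (y : Fin 3 → ℚ) (l : u) :
    mulVecQ B y l = B l 0 * y 0 + B l 1 * y 1 + B l 2 * y 2 := by
  rw [mulVecQ, finsum_eq_sum_of_fintype, Fin.sum_univ_three]

lemma exists_FS_ge : ∀ (m : ℕ) (a : Stream' ℕ+), ∃ b ∈ Hindman.FS a, m ≤ (b : ℕ) := by
  intro m
  induction m with
  | zero => exact fun a => ⟨a.head, Hindman.FS.head a, Nat.zero_le _⟩
  | succ m ih =>
    intro a
    obtain ⟨b, hb, hble⟩ := ih a.tail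
    refine ⟨a.head + b, Hindman.FS.cons a b hb, ?_⟩
    have : 1 ≤ (a.head : ℕ) := a.head.one_le
    simp only [PNat.add_coe]
    omega

theorem stmt10 (S : AddSubsemigroup ℚ) (hpos : ∀ s ∈ S, (0 : ℚ) < s)
    (hne : ∃ s, s ∈ S) (hproper : (S : Set ℚ) ≠ {q : ℚ | 0 < q})
    (hone : (1 : ℚ) ∈ S)
    (d : ℕ) (hdpos : 0 < d) (hd : (1 / (d : ℚ)) ∉ S)
    (A : Fin 3 → Fin 2 → ℚ)
    (hAdef : A = ![![0, 1], ![(d : ℚ), 1], ![(d : ℚ), 2]]) :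
    IPRQ A (S : Set ℚ) ∧
    ¬ ∃ (k : ℕ) (B : Fin k → Fin 3 → ℚ),
        ({y : Fin 3 → ℚ | ∃ x : Fin 2 → ℚ, (∀ j, x j ∈ (S : Set ℚ) \ {0}) ∧ y = mulVecQ A x} ∩
            {y : Fin 3 → ℚ | ∀ i, y i ∈ (S : Set ℚ) \ {0}} ⊆
          {y : Fin 3 → ℚ | (∀ i, y i ∈ (S : Set ℚ) \ {0}) ∧ ∀ l, mulVecQ B y l = 0}) ∧
        ({y : Fin 3 → ℚ | (∀ i, y i ∈ (S : Set ℚ) \ {0}) ∧ ∀ l, mulVecQ B y l = 0} ⊆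
          {y : Fin 3 → ℚ | ∃ x : Fin 2 → ℚ, (∀ j, x j ∈ (S : Set ℚ)) ∧ y = mulVecQ A x} ∩
            {y : Fin 3 → ℚ | ∀ i, y i ∈ (S : Set ℚ) \ {0}}) := by
  have hd0 : (d : ℚ) ≠ 0 := Nat.cast_ne_zero.mpr hdpos.ne'
  have natmem : ∀ n : ℕ, 0 < n → ((n : ℚ) ∈ (S : Set ℚ)) := by
    intro n hn
    induction n with
    | zero => omega
    | succ n ih =>
      rcases Nat.eq_zero_or_pos n with h | h
      · subst h; simpa using hone
      · have := S.add_mem (ih h) hone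
        push_cast
        convert this using 1
        exact SetLike.mem_coe
  have natmem' : ∀ n : ℕ, 0 < n → ((n : ℚ) ∈ (S : Set ℚ) \ {0}) := by
    intro n hn
    refine ⟨natmem n hn, ?_⟩
    simp only [Set.mem_singleton_iff, Nat.cast_eq_zero]
    omega
  constructor
  · -- image partition regularity, via Hindman's theorem
    intro k φ
    set s : Set (Set ℕ+) :=
      Set.range (fun i : Fin k => {n : ℕ+ | φ ((d : ℚ) * ((n : ℕ) : ℚ)) = i}) with hs
    have sfin : s.Finite := Set.finite_range _
    have scov : (⊤ : Set ℕ+) ⊆ ⋃₀ s := by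
      intro n _
      exact ⟨_, ⟨φ ((d : ℚ) * ((n : ℕ) : ℚ)), rfl⟩, rfl⟩
    obtain ⟨c, hc, a, hFS⟩ := Hindman.exists_FS_of_finite_cover s sfin scov
    obtain ⟨i₀, rfl⟩ := hc
    obtain ⟨b, hb, hble⟩ := exists_FS_ge ((a.head : ℕ) + 1) a.tail
    have ha0 : a.head ∈ Hindman.FS a := Hindman.FS.head a
    have hbFS : b ∈ Hindman.FS a := Hindman.FS.tail a b hb
    have habFS : a.head + b ∈ Hindman.FS a := Hindman.FS.cons a b hb
    set m : ℕ := (b : ℕ) - (a.head : ℕ) with hm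
    have hmpos : 0 < m := by omega
    have hmc : ((m : ℕ) : ℚ) = ((b : ℕ) : ℚ) - ((a.head : ℕ) : ℚ) := by
      push_cast [hm, Nat.cast_sub (by omega : (a.head : ℕ) ≤ (b : ℕ))]
      ring
    set x : Fin 2 → ℚ := ![(m : ℚ), ((d * (a.head : ℕ) : ℕ) : ℚ)] with hx
    have v0 : mulVecQ A x 0 = ((d * (a.head : ℕ) : ℕ) : ℚ) := by
      rw [mulVecQ_two]; simp [hAdef, hx, Matrix.vecHead, Matrix.vecTail]
    have v1 : mulVecQ A x 1 = ((d * (b : ℕ) : ℕ) : ℚ) := by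
      rw [mulVecQ_two]; simp [hAdef, hx, Matrix.vecHead, Matrix.vecTail, hmc]
      try (push_cast; ring)
    have v2 : mulVecQ A x 2 = ((d * ((a.head : ℕ) + (b : ℕ)) : ℕ) : ℚ) := by
      rw [mulVecQ_two]; simp [hAdef, hx, Matrix.vecHead, Matrix.vecTail, hmc]
      try (push_cast; ring)
    have key : ∀ p ∈ Hindman.FS a, φ ((d : ℚ) * ((p : ℕ) : ℚ)) = i₀ := fun p hp => hFS hp
    refine ⟨x, ?_, ?_, ?_⟩
    · intro j
      fin_cases j
      · exact natmem' m hmpos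
      · exact natmem' _ (by positivity)
    · intro i
      fin_cases i
      · show mulVecQ A x 0 ∈ (S : Set ℚ) \ {0}
        rw [v0]; exact natmem' _ (by positivity)
      · show mulVecQ A x 1 ∈ (S : Set ℚ) \ {0}
        rw [v1]; exact natmem' _ (by positivity)
      · show mulVecQ A x 2 ∈ (S : Set ℚ) \ {0}
        rw [v2]; exact natmem' _ (by positivity)
    · have c0 : φ (mulVecQ A x 0) = i₀ := by
        rw [v0, show ((d * (a.head : ℕ) : ℕ) : ℚ) = (d : ℚ) * ((a.head : ℕ) : ℚ) by
          push_cast; ring]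
        exact key _ ha0
      have c1 : φ (mulVecQ A x 1) = i₀ := by
        rw [v1, show ((d * (b : ℕ) : ℕ) : ℚ) = (d : ℚ) * ((b : ℕ) : ℚ) by push_cast; ring]
        exact key _ hbFS
      have c2 : φ (mulVecQ A x 2) = i₀ := by
        rw [v2, show ((d * ((a.head : ℕ) + (b : ℕ)) : ℕ) : ℚ)
              = (d : ℚ) * (((a.head + b : ℕ+) : ℕ) : ℚ) by push_cast; ring]
        exact key _ habFS
      intro i i'
      fin_cases i <;> fin_cases i' <;> simp_all
  · rintro ⟨k, B, hsub1, hsub2⟩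
    have w10 : mulVecQ A ![1, 1] 0 = ((1 : ℕ) : ℚ) := by
      rw [mulVecQ_two]; simp [hAdef, Matrix.vecHead, Matrix.vecTail]
    have w11 : mulVecQ A ![1, 1] 1 = ((d + 1 : ℕ) : ℚ) := by
      rw [mulVecQ_two]; simp [hAdef, Matrix.vecHead, Matrix.vecTail]; try (push_cast; ring)
    have w12 : mulVecQ A ![1, 1] 2 = ((d + 2 : ℕ) : ℚ) := by
      rw [mulVecQ_two]; simp [hAdef, Matrix.vecHead, Matrix.vecTail]; try (push_cast; ring)
    have w20 : mulVecQ A ![2, 1] 0 = ((1 : ℕ) : ℚ) := by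
      rw [mulVecQ_two]; simp [hAdef, Matrix.vecHead, Matrix.vecTail]
    have w21 : mulVecQ A ![2, 1] 1 = ((2 * d + 1 : ℕ) : ℚ) := by
      rw [mulVecQ_two]; simp [hAdef, Matrix.vecHead, Matrix.vecTail]; try (push_cast; ring)
    have w22 : mulVecQ A ![2, 1] 2 = ((2 * d + 2 : ℕ) : ℚ) := by
      rw [mulVecQ_two]; simp [hAdef, Matrix.vecHead, Matrix.vecTail]; try (push_cast; ring)
    have hy1 : mulVecQ A ![1, 1] ∈
        ({y : Fin 3 → ℚ | ∃ x : Fin 2 → ℚ, (∀ j, x j ∈ (S : Set ℚ) \ {0}) ∧ y = mulVecQ A x} ∩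
          {y : Fin 3 → ℚ | ∀ i, y i ∈ (S : Set ℚ) \ {0}}) := by
      constructor
      · exact ⟨![1, 1], by intro j; fin_cases j <;> simpa using natmem' 1 one_pos, rfl⟩
      · intro i
        fin_cases i
        · show mulVecQ A ![1, 1] 0 ∈ (S : Set ℚ) \ {0}
          rw [w10]; exact natmem' _ one_pos
        · show mulVecQ A ![1, 1] 1 ∈ (S : Set ℚ) \ {0}
          rw [w11]; exact natmem' _ (by omega)
        · show mulVecQ A ![1, 1] 2 ∈ (S : Set ℚ) \ {0}
          rw [w12]; exact natmem' _ (by omega)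
    have hy2 : mulVecQ A ![2, 1] ∈
        ({y : Fin 3 → ℚ | ∃ x : Fin 2 → ℚ, (∀ j, x j ∈ (S : Set ℚ) \ {0}) ∧ y = mulVecQ A x} ∩
          {y : Fin 3 → ℚ | ∀ i, y i ∈ (S : Set ℚ) \ {0}}) := by
      constructor
      · refine ⟨![2, 1], ?_, rfl⟩
        intro j
        fin_cases j
        · simpa using natmem' 2 (by omega)
        · simpa using natmem' 1 one_pos
      · intro i
        fin_cases i
        · show mulVecQ A ![2, 1] 0 ∈ (S : Set ℚ) \ {0}
          rw [w20]; exact natmem' _ one_pos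
        · show mulVecQ A ![2, 1] 1 ∈ (S : Set ℚ) \ {0}
          rw [w21]; exact natmem' _ (by omega)
        · show mulVecQ A ![2, 1] 2 ∈ (S : Set ℚ) \ {0}
          rw [w22]; exact natmem' _ (by omega)
    have hB1 := (hsub1 hy1).2
    have hB2 := (hsub1 hy2).2
    have hz : ∀ l, mulVecQ B ![1, 2, 3] l = 0 := by
      intro l
      have e1 := hB1 l
      have e2 := hB2 l
      rw [mulVecQ_three, w10, w11, w12] at e1
      rw [mulVecQ_three, w20, w21, w22] at e2
      push_cast at e1 e2
      rw [mulVecQ_three]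
      simp only [Matrix.cons_val_zero, Matrix.cons_val_one, Matrix.head_cons]
      rw [show (![(1:ℚ), 2, 3]) 2 = 3 from rfl]
      have key : (d : ℚ) * (B l 0 * 1 + B l 1 * 2 + B l 2 * 3) = 0 := by
        linear_combination (2 * (d:ℚ) - 1) * e1 + (1 - (d:ℚ)) * e2
      rcases mul_eq_zero.mp key with h | h
      · exact absurd h hd0
      · linarith
    have hzmem : ![1, 2, 3] ∈
        {y : Fin 3 → ℚ | (∀ i, y i ∈ (S : Set ℚ) \ {0}) ∧ ∀ l, mulVecQ B y l = 0} := by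
      refine ⟨?_, hz⟩
      intro i
      fin_cases i
      · simpa using natmem' 1 one_pos
      · simpa using natmem' 2 (by omega)
      · simpa using natmem' 3 (by omega)
    obtain ⟨⟨x, hxS, hxeq⟩, -⟩ := hsub2 hzmem
    have e0 : (1 : ℚ) = x 1 := by
      have h := congrFun hxeq 0
      rw [mulVecQ_two] at h
      simp [hAdef, Matrix.vecHead, Matrix.vecTail] at h
      linarith [h]
    have e1 : (2 : ℚ) = (d : ℚ) * x 0 + x 1 := by
      have h := congrFun hxeq 1
      rw [mulVecQ_two] at h
      simp [hAdef, Matrix.vecHead, Matrix.vecTail] at h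
      linarith [h]
    have hx0 : x 0 = 1 / (d : ℚ) := by
      field_simp
      linarith
    exact hd (hx0 ▸ hxS 0)
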